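/- Let f : ℝ → ℝ be twice continuously differentiable, g : ℝ → ℝ continuously differentiable, L > 0, T > 0 and M > 0. Then there exists a constant C > 0, depending only on f, g, L and M, such that for any two classical L-periodic solutions u and v of u_t + f(u)_x − u_xx + u_xxx = g(u) on [0,T] satisfying |u(t,x)| ≤ M, |v(t,x)| ≤ M, |∂_x u(t,x)| ≤ M and |∂_x v(t,x)| ≤ M for all (t,x) ∈ [0,T]×ℝ, one has the continuous-dependence (Gronwall) estimate ∫₀^L (u(t,x) − v(t,x))² dx ≤ e^{C·t} · ∫₀^L (u(0,x) − v(0,x))² dx for all t ∈ [0,T]. -/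

import Mathlib

open Set intervalIntegral Filter Topology MeasureTheory

lemma periodic_deriv_of_periodic {F : ℝ → ℝ} {L : ℝ} (h : ∀ x, F (x + L) = F x) (x : ℝ) :
    deriv F (x + L) = deriv F x := by
  have hfun : (fun y => F (y + L)) = F := funext h
  calc deriv F (x + L) = deriv (fun y => F (y + L)) x := (deriv_comp_add_const F L x).symm
    _ = deriv F x := by rw [hfun]

lemma abs_sub_le_add {a b A B : ℝ} (ha : |a| ≤ A) (hb : |b| ≤ B) : |a - b| ≤ A + B := by
  rw [sub_eq_add_neg]
  exact (abs_add_le _ _).trans (by rw [abs_neg]; exact add_le_add ha hb)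

lemma lipschitz_on_of_deriv_bound {h : ℝ → ℝ} {K M : ℝ} (hd : ∀ y, DifferentiableAt ℝ h y)
    (hbd : ∀ y ∈ Set.Icc (-M) M, |deriv h y| ≤ K) {a b : ℝ} (ha : |a| ≤ M) (hb : |b| ≤ M) :
    |h a - h b| ≤ K * |a - b| := by
  have := Convex.norm_image_sub_le_of_norm_deriv_le (s := Set.Icc (-M) M)
    (fun y _ => hd y) (fun y hy => by simpa [Real.norm_eq_abs] using hbd y hy)
    (convex_Icc _ _) (abs_le.1 hb) (abs_le.1 ha)
  simpa [Real.norm_eq_abs] using this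

lemma integral_period_deriv_zero (U V : ℝ → ℝ) (L : ℝ)
    (hpU : ∀ x, U (x + L) = U x) (hpV : ∀ x, V (x + L) = V x)
    (hdU : ∀ x, DifferentiableAt ℝ U x) (hdU1 : ∀ x, DifferentiableAt ℝ (deriv U) x)
    (hdU2 : ∀ x, DifferentiableAt ℝ (deriv (deriv U)) x)
    (hdV : ∀ x, DifferentiableAt ℝ V x) (hdV1 : ∀ x, DifferentiableAt ℝ (deriv V) x)
    (hdV2 : ∀ x, DifferentiableAt ℝ (deriv (deriv V)) x)
    (hcU : Continuous U) (hcU1 : Continuous (deriv U)) (hcU2 : Continuous (deriv (deriv U)))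
    (hcU3 : Continuous (deriv (deriv (deriv U))))
    (hcV : Continuous V) (hcV1 : Continuous (deriv V)) (hcV2 : Continuous (deriv (deriv V)))
    (hcV3 : Continuous (deriv (deriv (deriv V)))) :
    (∫ y in (0:ℝ)..L, (2*(deriv U y - deriv V y)^2
        + 2*(U y - V y)*(deriv (deriv U) y - deriv (deriv V) y)
        - 2*(U y - V y)*(deriv (deriv (deriv U)) y - deriv (deriv (deriv V)) y))) = 0 := by
  set ψ : ℝ → ℝ := fun y => 2*(U y - V y)*(deriv U y - deriv V y)
      - 2*(U y - V y)*(deriv (deriv U) y - deriv (deriv V) y)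
      + (deriv U y - deriv V y)^2 with hψdef
  have hψ : ∀ y, HasDerivAt ψ (2*(deriv U y - deriv V y)^2
        + 2*(U y - V y)*(deriv (deriv U) y - deriv (deriv V) y)
        - 2*(U y - V y)*(deriv (deriv (deriv U)) y - deriv (deriv (deriv V)) y)) y := by
    intro y
    have hW : HasDerivAt (fun z => U z - V z) (deriv U y - deriv V y) y :=
      (hdU y).hasDerivAt.sub (hdV y).hasDerivAt
    have hW1 : HasDerivAt (fun z => deriv U z - deriv V z)
        (deriv (deriv U) y - deriv (deriv V) y) y :=
      (hdU1 y).hasDerivAt.sub (hdV1 y).hasDerivAt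
    have hW2 : HasDerivAt (fun z => deriv (deriv U) z - deriv (deriv V) z)
        (deriv (deriv (deriv U)) y - deriv (deriv (deriv V)) y) y :=
      (hdU2 y).hasDerivAt.sub (hdV2 y).hasDerivAt
    have h := (((hW.const_mul 2).mul hW1).sub ((hW.const_mul 2).mul hW2)).add (hW1.pow 2)
    refine h.congr_deriv ?_
    push_cast
    ring
  have hcont : Continuous (fun y => 2*(deriv U y - deriv V y)^2
        + 2*(U y - V y)*(deriv (deriv U) y - deriv (deriv V) y)
        - 2*(U y - V y)*(deriv (deriv (deriv U)) y - deriv (deriv (deriv V)) y)) := by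
    fun_prop
  rw [intervalIntegral.integral_eq_sub_of_hasDerivAt (fun y _ => hψ y)
    (hcont.intervalIntegrable _ _)]
  have hp1U := periodic_deriv_of_periodic hpU
  have hp1V := periodic_deriv_of_periodic hpV
  have hp2U := periodic_deriv_of_periodic hp1U
  have hp2V := periodic_deriv_of_periodic hp1V
  have : ψ (0 + L) = ψ 0 := by
    rw [hψdef]
    simp only [hpU 0, hpV 0, hp1U 0, hp1V 0, hp2U 0, hp2V 0]
  rw [show (L:ℝ) = 0 + L by ring, this, sub_self]

/-- A classical `L`-periodic solution of `u_t + f(u)_x − u_xx + u_xxx = g(u)` on `[0,T]`: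
`u` is continuous on `[0,T] × ℝ`, `L`-periodic in space, its partial derivatives
`∂ₜu, ∂ₓu, ∂ₓ²u, ∂ₓ³u` exist and are continuous on `(0,T] × ℝ`, and the equation holds
pointwise on `(0,T] × ℝ`. -/
def IsClassicalPeriodicSolutionOn (f g : ℝ → ℝ) (L T : ℝ) (u : ℝ → ℝ → ℝ) : Prop :=
  ContinuousOn (fun p : ℝ × ℝ => u p.1 p.2) (Set.Icc (0:ℝ) T ×ˢ (Set.univ : Set ℝ)) ∧
  (∀ t ∈ Set.Icc (0:ℝ) T, ∀ x : ℝ, u t (x + L) = u t x) ∧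
  (∀ t ∈ Set.Ioc (0:ℝ) T, ∀ x : ℝ,
    DifferentiableAt ℝ (fun s => u s x) t ∧
    DifferentiableAt ℝ (u t) x ∧
    DifferentiableAt ℝ (deriv (u t)) x ∧
    DifferentiableAt ℝ (deriv (deriv (u t))) x) ∧
  ContinuousOn (fun p : ℝ × ℝ => deriv (fun s => u s p.2) p.1)
    (Set.Ioc (0:ℝ) T ×ˢ (Set.univ : Set ℝ)) ∧
  ContinuousOn (fun p : ℝ × ℝ => deriv (u p.1) p.2)
    (Set.Ioc (0:ℝ) T ×ˢ (Set.univ : Set ℝ)) ∧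
  ContinuousOn (fun p : ℝ × ℝ => deriv (deriv (u p.1)) p.2)
    (Set.Ioc (0:ℝ) T ×ˢ (Set.univ : Set ℝ)) ∧
  ContinuousOn (fun p : ℝ × ℝ => deriv (deriv (deriv (u p.1))) p.2)
    (Set.Ioc (0:ℝ) T ×ˢ (Set.univ : Set ℝ)) ∧
  (∀ t ∈ Set.Ioc (0:ℝ) T, ∀ x : ℝ,
    deriv (fun s => u s x) t + deriv f (u t x) * deriv (u t) x -
      deriv (deriv (u t)) x + deriv (deriv (deriv (u t))) x = g (u t x))

set_option maxHeartbeats 1000000 in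
/-- **Continuous dependence (Gronwall) estimate** for the generalized KdV–Burgers
equation with a source: there is a constant `C > 0`, depending only on `f`, `g`, `L`
and `M`, such that any two classical `L`-periodic solutions on `[0,T]` with values and
first spatial derivatives bounded by `M` satisfy
`∫₀^L (u(t) − v(t))² ≤ e^{Ct} ∫₀^L (u(0) − v(0))²`. -/
theorem continuous_dependence_generalized_KdVB
    (f g : ℝ → ℝ) (hf : ContDiff ℝ 2 f) (hg : ContDiff ℝ 1 g)
    (L M : ℝ) (hL : 0 < L) (hM : 0 < M) :
    ∃ C > (0 : ℝ), ∀ T : ℝ, 0 < T → ∀ u v : ℝ → ℝ → ℝ,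
      IsClassicalPeriodicSolutionOn f g L T u →
      IsClassicalPeriodicSolutionOn f g L T v →
      (∀ t ∈ Set.Icc (0:ℝ) T, ∀ x : ℝ, |u t x| ≤ M) →
      (∀ t ∈ Set.Icc (0:ℝ) T, ∀ x : ℝ, |v t x| ≤ M) →
      (∀ t ∈ Set.Icc (0:ℝ) T, ∀ x : ℝ, |deriv (u t) x| ≤ M) →
      (∀ t ∈ Set.Icc (0:ℝ) T, ∀ x : ℝ, |deriv (v t) x| ≤ M) →
      ∀ t ∈ Set.Icc (0:ℝ) T,
        (∫ x in (0:ℝ)..L, (u t x - v t x) ^ 2) ≤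
          Real.exp (C * t) * ∫ x in (0:ℝ)..L, (u 0 x - v 0 x) ^ 2 := by
  -- regularity of f and g
  have hf' : ContDiff ℝ 1 (deriv f) := by
    have h2 : ContDiff ℝ ((1:ℕ) + 1) f := by exact_mod_cast hf
    exact (contDiff_succ_iff_deriv.1 h2).2.2
  have hfd' : Differentiable ℝ (deriv f) := hf'.differentiable one_ne_zero
  have hf'c : Continuous (deriv f) := hf'.continuous
  have hf''c : Continuous (deriv (deriv f)) := (contDiff_one_iff_deriv.1 hf').2
  have hgd : Differentiable ℝ g := hg.differentiable one_ne_zero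
  have hg'c : Continuous (deriv g) := (contDiff_one_iff_deriv.1 hg).2
  -- bounds on the compact set [-M, M]
  obtain ⟨K1, hK1⟩ := (isCompact_Icc (a := -M) (b := M)).exists_bound_of_continuousOn
    hf'c.continuousOn
  obtain ⟨K2, hK2⟩ := (isCompact_Icc (a := -M) (b := M)).exists_bound_of_continuousOn
    hf''c.continuousOn
  obtain ⟨K3, hK3⟩ := (isCompact_Icc (a := -M) (b := M)).exists_bound_of_continuousOn
    hg'c.continuousOn
  have hMmem : (-M : ℝ) ∈ Set.Icc (-M) M := ⟨le_refl _, by linarith⟩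
  have hK1nn : 0 ≤ K1 := le_trans (norm_nonneg _) (hK1 _ hMmem)
  have hK2nn : 0 ≤ K2 := le_trans (norm_nonneg _) (hK2 _ hMmem)
  have hK3nn : 0 ≤ K3 := le_trans (norm_nonneg _) (hK3 _ hMmem)
  refine ⟨K1^2 + 2*K2*M + 2*K3 + 1, by nlinarith [sq_nonneg K1], ?_⟩
  set C : ℝ := K1^2 + 2*K2*M + 2*K3 + 1 with hCdef
  intro T hT u v hu hv hub hvb hub' hvb'
  obtain ⟨hu1, hu2, hu3, hu4, hu5, hu6, hu7, hu8⟩ := hu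
  obtain ⟨hv1, hv2, hv3, hv4, hv5, hv6, hv7, hv8⟩ := hv
  -- spatial continuity at fixed time
  have hcU : ∀ s ∈ Set.Icc (0:ℝ) T, Continuous (fun x => u s x) := fun s hs =>
    hu1.comp_continuous (continuous_const.prodMk continuous_id) (fun x => ⟨hs, trivial⟩)
  have hcV : ∀ s ∈ Set.Icc (0:ℝ) T, Continuous (fun x => v s x) := fun s hs =>
    hv1.comp_continuous (continuous_const.prodMk continuous_id) (fun x => ⟨hs, trivial⟩)
  have hcUt : ∀ s ∈ Set.Ioc (0:ℝ) T, Continuous (fun x => deriv (fun σ => u σ x) s) := fun s hs =>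
    hu4.comp_continuous (continuous_const.prodMk continuous_id) (fun x => ⟨hs, trivial⟩)
  have hcVt : ∀ s ∈ Set.Ioc (0:ℝ) T, Continuous (fun x => deriv (fun σ => v σ x) s) := fun s hs =>
    hv4.comp_continuous (continuous_const.prodMk continuous_id) (fun x => ⟨hs, trivial⟩)
  have hcU1 : ∀ s ∈ Set.Ioc (0:ℝ) T, Continuous (deriv (u s)) := fun s hs =>
    hu5.comp_continuous (continuous_const.prodMk continuous_id) (fun x => ⟨hs, trivial⟩)
  have hcV1 : ∀ s ∈ Set.Ioc (0:ℝ) T, Continuous (deriv (v s)) := fun s hs =>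
    hv5.comp_continuous (continuous_const.prodMk continuous_id) (fun x => ⟨hs, trivial⟩)
  have hcU2 : ∀ s ∈ Set.Ioc (0:ℝ) T, Continuous (deriv (deriv (u s))) := fun s hs =>
    hu6.comp_continuous (continuous_const.prodMk continuous_id) (fun x => ⟨hs, trivial⟩)
  have hcV2 : ∀ s ∈ Set.Ioc (0:ℝ) T, Continuous (deriv (deriv (v s))) := fun s hs =>
    hv6.comp_continuous (continuous_const.prodMk continuous_id) (fun x => ⟨hs, trivial⟩)
  have hcU3 : ∀ s ∈ Set.Ioc (0:ℝ) T, Continuous (deriv (deriv (deriv (u s)))) := fun s hs =>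
    hu7.comp_continuous (continuous_const.prodMk continuous_id) (fun x => ⟨hs, trivial⟩)
  have hcV3 : ∀ s ∈ Set.Ioc (0:ℝ) T, Continuous (deriv (deriv (deriv (v s)))) := fun s hs =>
    hv7.comp_continuous (continuous_const.prodMk continuous_id) (fun x => ⟨hs, trivial⟩)
  -- time continuity at fixed space point
  have hcTu : ∀ x : ℝ, ContinuousOn (fun s => u s x) (Set.Icc (0:ℝ) T) := fun x =>
    hu1.comp ((continuous_id.prodMk continuous_const).continuousOn) (fun s hs => ⟨hs, trivial⟩)
  have hcTv : ∀ x : ℝ, ContinuousOn (fun s => v s x) (Set.Icc (0:ℝ) T) := fun x =>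
    hv1.comp ((continuous_id.prodMk continuous_const).continuousOn) (fun s hs => ⟨hs, trivial⟩)
  set E : ℝ → ℝ := fun s => ∫ x in (0:ℝ)..L, (u s x - v s x)^2 with hEdef
  have habsw : ∀ s ∈ Set.Icc (0:ℝ) T, ∀ x : ℝ, |u s x - v s x| ≤ 2*M := by
    intro s hs x
    have h1 := hub s hs x
    have h2 := hvb s hs x
    have := abs_sub_le_add h1 h2
    linarith
  -- continuity of the energy
  have hEc : ContinuousOn E (Set.Icc 0 T) := by
    intro t₀ ht₀
    apply intervalIntegral.tendsto_integral_filter_of_dominated_convergence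
      (bound := fun _ => (2*M)^2)
    · filter_upwards [self_mem_nhdsWithin] with s hs
      exact (((hcU s hs).sub (hcV s hs)).pow 2).aestronglyMeasurable
    · filter_upwards [self_mem_nhdsWithin] with s hs
      apply ae_of_all
      intro x _
      rw [Real.norm_eq_abs, abs_pow]
      exact pow_le_pow_left₀ (abs_nonneg _) (habsw s hs x) 2
    · exact intervalIntegrable_const
    · apply ae_of_all
      intro x _
      exact (((hcTu x t₀ ht₀).sub (hcTv x t₀ ht₀)).pow 2).tendsto
  -- differentiability of the energy on (0, T)
  have hEd : ∀ τ ∈ Set.Ioo (0:ℝ) T, HasDerivAt E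
      (∫ x in (0:ℝ)..L, 2*(u τ x - v τ x)*(deriv (fun σ => u σ x) τ - deriv (fun σ => v σ x) τ))
      τ := by
    intro τ hτ
    set ε : ℝ := min τ (T - τ) / 2 with hεdef
    have hε0 : 0 < ε := by
      have h1 : 0 < min τ (T - τ) := lt_min hτ.1 (by linarith [hτ.2])
      positivity
    have hε1 : ε ≤ τ / 2 := by
      have := min_le_left τ (T - τ); rw [hεdef]; linarith
    have hε2 : ε ≤ (T - τ) / 2 := by
      have := min_le_right τ (T - τ); rw [hεdef]; linarith
    have hτ1 := hτ.1
    have hτ2 := hτ.2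
    have hball : ∀ s ∈ Metric.ball τ ε, s ∈ Set.Ioc (0:ℝ) T ∧ s ∈ Set.Icc (τ - ε) (τ + ε) := by
      intro s hs
      rw [Metric.mem_ball, Real.dist_eq, abs_lt] at hs
      exact ⟨⟨by linarith [hs.1], by linarith [hs.2]⟩, ⟨by linarith [hs.1], by linarith [hs.2]⟩⟩
    have hKsub : Set.Icc (τ - ε) (τ + ε) ×ˢ Set.Icc (0:ℝ) L ⊆
        Set.Ioc (0:ℝ) T ×ˢ (Set.univ : Set ℝ) := by
      rintro ⟨s, x⟩ ⟨hs, _⟩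
      exact ⟨⟨by linarith [hs.1], by linarith [hs.2]⟩, trivial⟩
    obtain ⟨Cu, hCu⟩ := (isCompact_Icc.prod isCompact_Icc).exists_bound_of_continuousOn
      (hu4.mono hKsub)
    obtain ⟨Cv, hCv⟩ := (isCompact_Icc.prod isCompact_Icc).exists_bound_of_continuousOn
      (hv4.mono hKsub)
    have hτIoc : τ ∈ Set.Ioc (0:ℝ) T := ⟨hτ.1, hτ.2.le⟩
    have hτIcc : τ ∈ Set.Icc (0:ℝ) T := ⟨hτ.1.le, hτ.2.le⟩
    refine (intervalIntegral.hasDerivAt_integral_of_dominated_loc_of_deriv_le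
      (F := fun s x => (u s x - v s x)^2)
      (F' := fun s x => 2*(u s x - v s x)*(deriv (fun σ => u σ x) s - deriv (fun σ => v σ x) s))
      (bound := fun _ => 2*(2*M)*(Cu+Cv)) (Metric.ball_mem_nhds τ hε0) ?_ ?_ ?_ ?_ ?_ ?_).2
    · filter_upwards [Metric.ball_mem_nhds τ hε0] with s hs
      have hsIcc : s ∈ Set.Icc (0:ℝ) T := ⟨(hball s hs).1.1.le, (hball s hs).1.2⟩
      exact (((hcU s hsIcc).sub (hcV s hsIcc)).pow 2).aestronglyMeasurable
    · exact (((hcU τ hτIcc).sub (hcV τ hτIcc)).pow 2).intervalIntegrable _ _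
    · exact ((continuous_const.mul ((hcU τ hτIcc).sub (hcV τ hτIcc))).mul
        ((hcUt τ hτIoc).sub (hcVt τ hτIoc))).aestronglyMeasurable
    · apply ae_of_all
      intro x hx s hs
      obtain ⟨hsIoc, hsIcc'⟩ := hball s hs
      have hsIcc : s ∈ Set.Icc (0:ℝ) T := ⟨hsIoc.1.le, hsIoc.2⟩
      have hxIcc : x ∈ Set.Icc (0:ℝ) L := by
        rw [Set.uIoc_of_le hL.le] at hx
        exact ⟨hx.1.le, hx.2⟩
      have h1 : |u s x - v s x| ≤ 2*M := habsw s hsIcc x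
      have h2 : |deriv (fun σ => u σ x) s| ≤ Cu := by
        simpa [Real.norm_eq_abs] using hCu (s, x) ⟨hsIcc', hxIcc⟩
      have h3 : |deriv (fun σ => v σ x) s| ≤ Cv := by
        simpa [Real.norm_eq_abs] using hCv (s, x) ⟨hsIcc', hxIcc⟩
      have h4 := abs_sub_le_add h2 h3
      rw [Real.norm_eq_abs, abs_mul, abs_mul, abs_two]
      have h5 : 0 ≤ Cu + Cv := le_trans (abs_nonneg _) h4
      apply mul_le_mul _ h4 (abs_nonneg _) (by positivity)
      have := mul_le_mul_of_nonneg_left h1 (le_refl (2:ℝ) |> fun _ => (by norm_num : (0:ℝ) ≤ 2))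
      linarith
    · exact intervalIntegrable_const
    · apply ae_of_all
      intro x _ s hs
      have hsIoc := (hball s hs).1
      have h1 : HasDerivAt (fun σ => u σ x) (deriv (fun σ => u σ x) s) s :=
        ((hu3 s hsIoc x).1).hasDerivAt
      have h2 : HasDerivAt (fun σ => v σ x) (deriv (fun σ => v σ x) s) s :=
        ((hv3 s hsIoc x).1).hasDerivAt
      have h := (h1.sub h2).pow 2
      refine h.congr_deriv ?_
      push_cast
      simp only [Pi.sub_apply]
      ring
  -- the energy inequality
  have hD : ∀ τ ∈ Set.Ioc (0:ℝ) T,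
      (∫ x in (0:ℝ)..L, 2*(u τ x - v τ x)*(deriv (fun σ => u σ x) τ - deriv (fun σ => v σ x) τ))
        ≤ C * E τ := by
    intro τ hτ
    have hτIcc : τ ∈ Set.Icc (0:ℝ) T := ⟨hτ.1.le, hτ.2⟩
    have hcw : Continuous (fun x => u τ x - v τ x) := (hcU τ hτIcc).sub (hcV τ hτIcc)
    have hcFp : Continuous (fun x =>
        2*(u τ x - v τ x)*(deriv (fun σ => u σ x) τ - deriv (fun σ => v σ x) τ)) :=
      (continuous_const.mul hcw).mul ((hcUt τ hτ).sub (hcVt τ hτ))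
    have hcψd : Continuous (fun y => 2*(deriv (u τ) y - deriv (v τ) y)^2
        + 2*(u τ y - v τ y)*(deriv (deriv (u τ)) y - deriv (deriv (v τ)) y)
        - 2*(u τ y - v τ y)*(deriv (deriv (deriv (u τ))) y - deriv (deriv (deriv (v τ))) y)) := by
      have c1 := hcU1 τ hτ
      have c2 := hcV1 τ hτ
      have c3 := hcU2 τ hτ
      have c4 := hcV2 τ hτ
      have c5 := hcU3 τ hτ
      have c6 := hcV3 τ hτ
      have c7 := hcU τ hτIcc
      have c8 := hcV τ hτIcc
      exact ((continuous_const.mul ((c1.sub c2).pow 2)).add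
        ((continuous_const.mul (c7.sub c8)).mul (c3.sub c4))).sub
        ((continuous_const.mul (c7.sub c8)).mul (c5.sub c6))
    have hFTC := integral_period_deriv_zero (u τ) (v τ) L (hu2 τ hτIcc) (hv2 τ hτIcc)
      (fun x => (hu3 τ hτ x).2.1) (fun x => (hu3 τ hτ x).2.2.1) (fun x => (hu3 τ hτ x).2.2.2)
      (fun x => (hv3 τ hτ x).2.1) (fun x => (hv3 τ hτ x).2.2.1) (fun x => (hv3 τ hτ x).2.2.2)
      (hcU τ hτIcc) (hcU1 τ hτ) (hcU2 τ hτ) (hcU3 τ hτ)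
      (hcV τ hτIcc) (hcV1 τ hτ) (hcV2 τ hτ) (hcV3 τ hτ)
    have hpt : ∀ x : ℝ,
        2*(u τ x - v τ x)*(deriv (fun σ => u σ x) τ - deriv (fun σ => v σ x) τ)
          - (2*(deriv (u τ) x - deriv (v τ) x)^2
             + 2*(u τ x - v τ x)*(deriv (deriv (u τ)) x - deriv (deriv (v τ)) x)
             - 2*(u τ x - v τ x)*(deriv (deriv (deriv (u τ))) x - deriv (deriv (deriv (v τ))) x))
          ≤ C * (u τ x - v τ x)^2 := by
      intro x
      have hequ := hu8 τ hτ x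
      have heqv := hv8 τ hτ x
      set A := u τ x with hAdef
      set B := v τ x with hBdef
      set A1 := deriv (u τ) x with hA1def
      set B1 := deriv (v τ) x with hB1def
      set A2 := deriv (deriv (u τ)) x with hA2def
      set B2 := deriv (deriv (v τ)) x with hB2def
      set A3 := deriv (deriv (deriv (u τ))) x with hA3def
      set B3 := deriv (deriv (deriv (v τ))) x with hB3def
      set At := deriv (fun σ => u σ x) τ with hAtdef
      set Bt := deriv (fun σ => v σ x) τ with hBtdef
      have hA : |A| ≤ M := hub τ hτIcc x
      have hB : |B| ≤ M := hvb τ hτIcc x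
      have hB1m : |B1| ≤ M := hvb' τ hτIcc x
      have hgL : |g A - g B| ≤ K3 * |A - B| := lipschitz_on_of_deriv_bound (fun y => hgd y)
        (fun y hy => by simpa [Real.norm_eq_abs] using hK3 y hy) hA hB
      have hfL : |deriv f A - deriv f B| ≤ K2 * |A - B| := lipschitz_on_of_deriv_bound
        (fun y => hfd' y) (fun y hy => by simpa [Real.norm_eq_abs] using hK2 y hy) hA hB
      have hf1 : |deriv f A| ≤ K1 := by
        simpa [Real.norm_eq_abs] using hK1 A (Set.mem_Icc.2 (abs_le.1 hA))
      have hAt : At = g A - deriv f A * A1 + A2 - A3 := by linarith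
      have hBt : Bt = g B - deriv f B * B1 + B2 - B3 := by linarith
      rw [hAt, hBt, hCdef]
      have t1 : 2*(A - B)*(g A - g B) ≤ 2*K3*(A - B)^2 := by
        have e1 : (A - B)*(g A - g B) ≤ |A - B| * |g A - g B| := by
          have h := le_abs_self ((A - B)*(g A - g B))
          rwa [abs_mul] at h
        have e2 : |A - B| * |g A - g B| ≤ |A - B| * (K3 * |A - B|) :=
          mul_le_mul_of_nonneg_left hgL (abs_nonneg _)
        have e3 : |A - B| * (K3 * |A - B|) = K3 * (A - B)^2 := by
          rw [show |A - B| * (K3 * |A - B|) = K3 * (|A - B| * |A - B|) from by ring,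
            abs_mul_abs_self, ← pow_two]
        linarith
      have t2 : -(2*(A - B)*(deriv f A * (A1 - B1))) ≤ K1^2*(A - B)^2 + (A1 - B1)^2 := by
        have e1 : -((A - B)*(deriv f A * (A1 - B1))) ≤ |A - B| * (|deriv f A| * |A1 - B1|) := by
          have h := neg_le_abs ((A - B)*(deriv f A * (A1 - B1)))
          rwa [abs_mul, abs_mul] at h
        have e2 : |A - B| * (|deriv f A| * |A1 - B1|) ≤ |A - B| * (K1 * |A1 - B1|) :=
          mul_le_mul_of_nonneg_left (mul_le_mul_of_nonneg_right hf1 (abs_nonneg _)) (abs_nonneg _)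
        have e3 : 2*(|A - B| * (K1 * |A1 - B1|)) ≤ (K1*|A - B|)^2 + |A1 - B1|^2 := by
          calc 2*(|A - B| * (K1 * |A1 - B1|)) = 2*(K1*|A - B|)*|A1 - B1| := by ring
            _ ≤ (K1*|A - B|)^2 + |A1 - B1|^2 := two_mul_le_add_sq _ _
        have e4 : (K1*|A - B|)^2 = K1^2*(A - B)^2 := by rw [mul_pow, sq_abs]
        have e5 : |A1 - B1|^2 = (A1 - B1)^2 := sq_abs _
        linarith
      have t3 : -(2*(A - B)*((deriv f A - deriv f B)*B1)) ≤ 2*K2*M*(A - B)^2 := by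
        have e1 : -((A - B)*((deriv f A - deriv f B)*B1)) ≤
            |A - B| * (|deriv f A - deriv f B| * |B1|) := by
          have h := neg_le_abs ((A - B)*((deriv f A - deriv f B)*B1))
          rwa [abs_mul, abs_mul] at h
        have e2 : |deriv f A - deriv f B| * |B1| ≤ (K2*|A - B|) * M :=
          mul_le_mul hfL hB1m (abs_nonneg _) (by positivity)
        have e3 : |A - B| * ((K2*|A - B|) * M) = K2*M*(A - B)^2 := by
          rw [show |A - B| * ((K2*|A - B|) * M) = K2*M*(|A - B| * |A - B|) from by ring,
            abs_mul_abs_self, ← pow_two]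
        have e4 : |A - B| * (|deriv f A - deriv f B| * |B1|) ≤ |A - B| * ((K2*|A - B|) * M) :=
          mul_le_mul_of_nonneg_left e2 (abs_nonneg _)
        linarith
      nlinarith [t1, t2, t3, sq_nonneg (A - B), sq_nonneg (A1 - B1)]
    have hInt1 : IntervalIntegrable (fun x =>
        2*(u τ x - v τ x)*(deriv (fun σ => u σ x) τ - deriv (fun σ => v σ x) τ))
        MeasureTheory.volume 0 L := hcFp.intervalIntegrable _ _
    have hIntψ : IntervalIntegrable (fun y => 2*(deriv (u τ) y - deriv (v τ) y)^2
        + 2*(u τ y - v τ y)*(deriv (deriv (u τ)) y - deriv (deriv (v τ)) y)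
        - 2*(u τ y - v τ y)*(deriv (deriv (deriv (u τ))) y - deriv (deriv (deriv (v τ))) y))
        MeasureTheory.volume 0 L := hcψd.intervalIntegrable _ _
    have hIntw2 : IntervalIntegrable (fun x => C*(u τ x - v τ x)^2)
        MeasureTheory.volume 0 L := (continuous_const.mul (hcw.pow 2)).intervalIntegrable _ _
    calc (∫ x in (0:ℝ)..L,
          2*(u τ x - v τ x)*(deriv (fun σ => u σ x) τ - deriv (fun σ => v σ x) τ))
        = ∫ x in (0:ℝ)..L,
          (2*(u τ x - v τ x)*(deriv (fun σ => u σ x) τ - deriv (fun σ => v σ x) τ)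
            - (2*(deriv (u τ) x - deriv (v τ) x)^2
             + 2*(u τ x - v τ x)*(deriv (deriv (u τ)) x - deriv (deriv (v τ)) x)
             - 2*(u τ x - v τ x)*(deriv (deriv (deriv (u τ))) x - deriv (deriv (deriv (v τ))) x))) := by
          rw [intervalIntegral.integral_sub hInt1 hIntψ, hFTC, sub_zero]
      _ ≤ ∫ x in (0:ℝ)..L, C*(u τ x - v τ x)^2 :=
          intervalIntegral.integral_mono_on hL.le (hInt1.sub hIntψ) hIntw2 (fun x _ => hpt x)
      _ = C * E τ := by rw [intervalIntegral.integral_const_mul]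
  -- Gronwall
  intro t ht
  rcases eq_or_lt_of_le ht.1 with h0 | h0
  · rw [← h0]
    simp [E]
  have key : ∀ s₀ ∈ Set.Ioo (0:ℝ) t, E t ≤ E s₀ * Real.exp (C * (t - s₀)) := by
    intro s₀ hs₀
    have hsub : Set.Icc s₀ t ⊆ Set.Icc 0 T := Set.Icc_subset_Icc hs₀.1.le ht.2
    have hIoo : ∀ x ∈ Set.Ico s₀ t, x ∈ Set.Ioo (0:ℝ) T := fun x hx =>
      ⟨lt_of_lt_of_le hs₀.1 hx.1, lt_of_lt_of_le hx.2 ht.2⟩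
    have := le_gronwallBound_of_liminf_deriv_right_le (f := E)
      (f' := fun τ => ∫ x in (0:ℝ)..L,
        2*(u τ x - v τ x)*(deriv (fun σ => u σ x) τ - deriv (fun σ => v σ x) τ))
      (δ := E s₀) (K := C) (ε := 0) (a := s₀) (b := t)
      (hEc.mono hsub) ?_ le_rfl ?_ t (Set.right_mem_Icc.2 hs₀.2.le)
    · rwa [gronwallBound_ε0] at this
    · intro x hx r hr
      have hder := hEd x (hIoo x hx)
      have hslope : Tendsto (slope E x) (𝓝[>] x) (𝓝 _) :=
        (hasDerivAt_iff_tendsto_slope.1 hder).mono_left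
          (nhdsWithin_mono x (fun z hz => ne_of_gt hz))
      have hev : ∀ᶠ z in 𝓝[>] x, slope E x z < r := hslope.eventually_lt_const hr
      exact hev.frequently.mono (fun z hz => by
        rwa [slope_def_field, div_eq_inv_mul] at hz)
    · intro x hx
      rw [add_zero]
      exact hD x ⟨(hIoo x hx).1, (hIoo x hx).2.le⟩
  have hne : (𝓝[Set.Ioo (0:ℝ) t] (0:ℝ)).NeBot := by
    rw [← mem_closure_iff_nhdsWithin_neBot, closure_Ioo (ne_of_lt h0)]
    exact ⟨le_refl 0, h0.le⟩
  have htend : Tendsto (fun s₀ => E s₀ * Real.exp (C * (t - s₀)))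
      (𝓝[Set.Ioo (0:ℝ) t] 0) (𝓝 (E 0 * Real.exp (C * (t - 0)))) := by
    apply Tendsto.mul
    · exact (hEc 0 ⟨le_refl 0, hT.le⟩).mono_left
        (nhdsWithin_mono 0 (fun z hz => ⟨hz.1.le, hz.2.le.trans ht.2⟩))
    · exact ((Real.continuous_exp.comp (continuous_const.mul (continuous_const.sub continuous_id))).tendsto 0).mono_left nhdsWithin_le_nhds
  have hfin : E t ≤ E 0 * Real.exp (C * (t - 0)) := by
    apply ge_of_tendsto htend
    filter_upwards [self_mem_nhdsWithin] with s₀ hs₀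
    exact key s₀ hs₀
  rw [sub_zero] at hfin
  calc (∫ x in (0:ℝ)..L, (u t x - v t x) ^ 2) = E t := rfl
    _ ≤ E 0 * Real.exp (C * t) := hfin
    _ = Real.exp (C * t) * ∫ x in (0:ℝ)..L, (u 0 x - v 0 x) ^ 2 := by rw [mul_comm]
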